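/- Let α_1 ∈ (1/2, 1) be irrational with continued fraction expansion [0; a_1, a_2, …] (so a_1 = 1), suppose a_i > 1 for all i ≥ 2, let (q_k)_{k≥0} be the convergent denominators of α_1, and set α = (α_1, 1 − α_1) ∈ ℝ². Fix 1 ≤ q ≤ ∞. Then for every i ≥ 1 and every N with 2q_{i+1} + 1 ≤ N ≤ q_{i+2}, one has h_j(N) = h_1(N) for all j = 1, 2, …, N. -/

import Mathlib

open scoped BigOperators ENNReal NNReal

/-- Distance from a real number to the nearest integer (the torus norm on ℝ/ℤ). -/
noncomputable def nint (t : ℝ) : ℝ := |t - round t|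

/-- The `L_q` distance (for `1 ≤ q ≤ ∞`) between two points of the torus `ℝ^d/ℤ^d`,
computed on representatives in `ℝ^d`. -/
noncomputable def lqDist (q : ℝ≥0∞) {d : ℕ} (x y : Fin d → ℝ) : ℝ :=
  if q = ⊤ then ⨆ i, nint (x i - y i)
  else (∑ i, nint (x i - y i) ^ q.toReal) ^ (1 / q.toReal)

/-- The `n`-th point of the `d`-dimensional Kronecker sequence `z_n = nα + ℤ^d`
(as a representative in `ℝ^d`). -/
noncomputable def kron {d : ℕ} (α : Fin d → ℝ) (n : ℕ) : Fin d → ℝ :=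
  fun c => (n : ℝ) * α c

/-- `L_q`-distance on the torus between the `i`-th and `j`-th points of the
Kronecker sequence of `α`. -/
noncomputable def kronDist (q : ℝ≥0∞) {d : ℕ} (α : Fin d → ℝ) (i j : ℕ) : ℝ :=
  lqDist q (kron α i) (kron α j)

/-- The index `j ∈ {1, …, N} \ {i}` of the nearest neighbor of `z_i` in
`S_N = {z_1, …, z_N}` w.r.t. the `L_q` torus metric; ties are broken by taking
the largest such index. -/
noncomputable def nnIndex (q : ℝ≥0∞) {d : ℕ} (α : Fin d → ℝ) (N i : ℕ) : ℕ :=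
  sSup {j : ℕ | j ∈ Finset.Icc 1 N ∧ j ≠ i ∧
    ∀ m ∈ Finset.Icc 1 N, m ≠ i → kronDist q α i j ≤ kronDist q α i m}

/-- `h_i(N) = |j - i|` where `z_j` is the nearest neighbor of `z_i` in `S_N`:
the counting-metric distance of `z_i` to its nearest neighbor. -/
noncomputable def hFun (q : ℝ≥0∞) {d : ℕ} (α : Fin d → ℝ) (N i : ℕ) : ℕ :=
  Nat.dist (nnIndex q α N i) i

/-- `g_N(α, ℤ^d, ‖·‖_q)`: the number of distinct nearest neighbor distances
among `d_q(z_i, nn_1(z_i))`, `i = 1, …, N`. -/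
noncomputable def gN (q : ℝ≥0∞) {d : ℕ} (α : Fin d → ℝ) (N : ℕ) : ℕ :=
  ((Finset.Icc 1 N).image (fun i => kronDist q α i (nnIndex q α N i))).card

/-- The Gauss map `x ↦ {1/x}` generating the continued fraction expansion. -/
noncomputable def gaussMap (x : ℝ) : ℝ := Int.fract x⁻¹

/-- The partial quotients of the continued fraction expansion `[0; a_1, a_2, …]`
of an irrational `α ∈ (0,1)`: `a_n = ⌊1 / G^[n-1](α)⌋` (with `a_0 = 0`). -/
noncomputable def cfA (α : ℝ) : ℕ → ℕ
  | 0 => 0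
  | n + 1 => (⌊(gaussMap^[n] α)⁻¹⌋).toNat

/-- The denominators of the convergents of the continued fraction of `α`:
`q_0 = 1`, `q_1 = a_1`, `q_n = a_n q_{n-1} + q_{n-2}`. -/
noncomputable def cfQ (α : ℝ) : ℕ → ℕ
  | 0 => 1
  | 1 => cfA α 1
  | n + 2 => cfA α (n + 2) * cfQ α (n + 1) + cfQ α n

lemma nint_nonneg (t : ℝ) : 0 ≤ nint t := abs_nonneg _

lemma nint_le (t : ℝ) (m : ℤ) : nint t ≤ |t - m| := by
  rcases eq_or_ne m (round t) with h | h
  · subst h; exact le_of_eq rfl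
  · have h1 : |t - round t| ≤ 1 / 2 := abs_sub_round t
    have h2 : (1 : ℝ) ≤ |(round t : ℝ) - m| := by
      have hne : round t - m ≠ 0 := sub_ne_zero.mpr (Ne.symm h)
      have := Int.one_le_abs hne
      calc (1:ℝ) = ((1:ℤ):ℝ) := by norm_num
        _ ≤ ((|round t - m| : ℤ) : ℝ) := by exact_mod_cast this
        _ = |(round t : ℝ) - m| := by push_cast; ring_nf
    have h3 : |(round t : ℝ) - m| ≤ |(round t : ℝ) - t| + |t - m| := abs_sub_le _ _ _
    have h4 : |(round t : ℝ) - t| = |t - round t| := abs_sub_comm _ _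
    unfold nint
    linarith

lemma nint_add_int (t : ℝ) (m : ℤ) : nint (t + m) = nint t := by
  apply le_antisymm
  · have := nint_le (t + m) (round t + m)
    simpa [nint, abs_sub_comm] using this.trans (le_of_eq (by push_cast; ring_nf))
  · have := nint_le t (round (t + m) - m)
    refine this.trans (le_of_eq ?_)
    unfold nint
    push_cast
    ring_nf

lemma nint_neg (t : ℝ) : nint (-t) = nint t := by
  apply le_antisymm
  · have := nint_le (-t) (-round t)
    refine this.trans (le_of_eq ?_)
    unfold nint; push_cast; rw [abs_sub_comm]; ring_nf
  · have := nint_le t (-round (-t))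
    refine this.trans (le_of_eq ?_)
    unfold nint; push_cast; rw [abs_sub_comm]; ring_nf

noncomputable def cfP (α : ℝ) : ℕ → ℕ
  | 0 => 0
  | 1 => 1
  | n + 2 => cfA α (n + 2) * cfP α (n + 1) + cfP α n

noncomputable def aseq (α : ℝ) (n : ℕ) : ℝ := gaussMap^[n] α

noncomputable def Bprod (α : ℝ) (n : ℕ) : ℝ := ∏ k ∈ Finset.range (n + 1), aseq α k

section cf
variable {α : ℝ} (h0 : 0 < α) (h1 : α < 1) (hirr : Irrational α)

lemma aseq_zero : aseq α 0 = α := rfl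

lemma aseq_succ (n : ℕ) : aseq α (n + 1) = Int.fract (aseq α n)⁻¹ := by
  simp [aseq, Function.iterate_succ_apply', gaussMap]

include h0 h1 hirr in
lemma aseq_prop (n : ℕ) : Irrational (aseq α n) ∧ 0 < aseq α n ∧ aseq α n < 1 := by
  induction n with
  | zero => exact ⟨hirr, h0, h1⟩
  | succ n ih =>
    obtain ⟨hi, hp, hl⟩ := ih
    rw [aseq_succ]
    have hinv : Irrational (aseq α n)⁻¹ := hi.inv
    have hfr : Irrational (Int.fract (aseq α n)⁻¹) := by
      unfold Int.fract
      exact hinv.sub_intCast _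
    refine ⟨hfr, ?_, Int.fract_lt_one _⟩
    rcases (Int.fract_nonneg ((aseq α n)⁻¹)).lt_or_eq with h | h
    · exact h
    · exact absurd (by rw [← h]; exact ⟨0, by norm_num⟩) hfr

include h0 h1 hirr in
lemma aseq_inv_gt_one (n : ℕ) : 1 < (aseq α n)⁻¹ := by
  obtain ⟨_, hp, hl⟩ := aseq_prop h0 h1 hirr n
  exact (one_lt_inv₀ hp).mpr hl

lemma cfA_succ (n : ℕ) : cfA α (n + 1) = (⌊(aseq α n)⁻¹⌋).toNat := rfl

include h0 h1 hirr in
lemma cfA_pos (n : ℕ) : 1 ≤ cfA α (n + 1) := by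
  rw [cfA_succ]
  have := aseq_inv_gt_one h0 h1 hirr n
  have : (1 : ℤ) ≤ ⌊(aseq α n)⁻¹⌋ := by
    rw [Int.le_floor]; push_cast; linarith
  omega

include h0 h1 hirr in
lemma cfA_cast (n : ℕ) : (cfA α (n + 1) : ℝ) = (⌊(aseq α n)⁻¹⌋ : ℝ) := by
  rw [cfA_succ]
  have := aseq_inv_gt_one h0 h1 hirr n
  have h : (1 : ℤ) ≤ ⌊(aseq α n)⁻¹⌋ := by rw [Int.le_floor]; push_cast; linarith
  have := Int.toNat_of_nonneg (by omega : (0:ℤ) ≤ ⌊(aseq α n)⁻¹⌋)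
  exact_mod_cast congrArg (fun z : ℤ => (z : ℝ)) this

include h0 h1 hirr in
lemma aseq_rec (n : ℕ) : aseq α (n + 1) = (aseq α n)⁻¹ - cfA α (n + 1) := by
  rw [aseq_succ, cfA_cast h0 h1 hirr, Int.fract]

include h0 h1 hirr in
lemma Bprod_pos (n : ℕ) : 0 < Bprod α n :=
  Finset.prod_pos fun k _ => (aseq_prop h0 h1 hirr k).2.1

lemma Bprod_succ (n : ℕ) : Bprod α (n + 1) = Bprod α n * aseq α (n + 1) :=
  Finset.prod_range_succ _ _

include h0 h1 hirr in
lemma Bprod_rec (n : ℕ) :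
    Bprod α (n + 2) = Bprod α n - (cfA α (n + 2) : ℝ) * Bprod α (n + 1) := by
  have hne : aseq α (n + 1) ≠ 0 := ne_of_gt (aseq_prop h0 h1 hirr (n + 1)).2.1
  have h2 := aseq_rec h0 h1 hirr (n + 1)
  rw [Bprod_succ, Bprod_succ, h2]
  field_simp

include h0 h1 hirr in
lemma tval (n : ℕ) :
    (cfQ α n : ℝ) * α - (cfP α n : ℝ) = (-1) ^ n * Bprod α n := by
  induction n using Nat.twoStepInduction with
  | zero =>
    simp [cfQ, cfP, Bprod, aseq_zero]
  | one =>
    have hrec := aseq_rec h0 h1 hirr 0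
    have hne : α ≠ 0 := ne_of_gt h0
    rw [show cfQ α 1 = cfA α 1 from rfl, show cfP α 1 = 1 from rfl]
    rw [show Bprod α 1 = α * aseq α 1 by
      rw [Bprod_succ]; simp [Bprod, aseq_zero]]
    rw [hrec, aseq_zero]
    field_simp
    ring
  | more n ih ih1 =>
    have hq : (cfQ α (n + 2) : ℝ) = (cfA α (n + 2) : ℝ) * cfQ α (n + 1) + cfQ α n := by
      rw [show cfQ α (n + 2) = cfA α (n + 2) * cfQ α (n + 1) + cfQ α n from rfl]
      push_cast; ring
    have hp : (cfP α (n + 2) : ℝ) = (cfA α (n + 2) : ℝ) * cfP α (n + 1) + cfP α n := by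
      rw [show cfP α (n + 2) = cfA α (n + 2) * cfP α (n + 1) + cfP α n from rfl]
      push_cast; ring
    have hB := Bprod_rec h0 h1 hirr n
    rw [hq, hp, hB]
    linear_combination ((cfA α (n + 2)) : ℝ) * ih1 + ih

lemma cfDet (n : ℕ) :
    (cfP α (n + 1) : ℤ) * (cfQ α n : ℤ) - (cfP α n : ℤ) * (cfQ α (n + 1) : ℤ) = (-1) ^ n := by
  induction n with
  | zero => simp [cfP, cfQ]
  | succ n ih =>
    have hq : (cfQ α (n + 2) : ℤ) = (cfA α (n + 2) : ℤ) * cfQ α (n + 1) + cfQ α n := by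
      rw [show cfQ α (n + 2) = cfA α (n + 2) * cfQ α (n + 1) + cfQ α n from rfl]; push_cast; ring
    have hp : (cfP α (n + 2) : ℤ) = (cfA α (n + 2) : ℤ) * cfP α (n + 1) + cfP α n := by
      rw [show cfP α (n + 2) = cfA α (n + 2) * cfP α (n + 1) + cfP α n from rfl]; push_cast; ring
    rw [hp, hq]
    linear_combination (-1 : ℤ) * ih

include h0 h1 hirr in
lemma cfQ_pos (n : ℕ) : 1 ≤ cfQ α n := by
  induction n using Nat.twoStepInduction with
  | zero => simp [cfQ]
  | one => exact cfA_pos h0 h1 hirr 0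
  | more n ih ih1 =>
    have := cfA_pos h0 h1 hirr (n + 1)
    rw [show cfQ α (n + 2) = cfA α (n + 2) * cfQ α (n + 1) + cfQ α n from rfl]
    nlinarith

include h0 h1 hirr in
lemma bestApprox (n : ℕ) (k p : ℤ) (hk1 : 1 ≤ k) (hk2 : k < (cfQ α (n + 1) : ℤ))
    (hkne : k ≠ (cfQ α n : ℤ)) : Bprod α n < |(k : ℝ) * α - (p : ℝ)| := by
  set qn : ℤ := (cfQ α n : ℤ) with hqn
  set qn1 : ℤ := (cfQ α (n + 1) : ℤ) with hqn1
  set pn : ℤ := (cfP α n : ℤ) with hpn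
  set pn1 : ℤ := (cfP α (n + 1) : ℤ) with hpn1
  set s : ℤ := (-1) ^ n with hsdef
  have hdet : pn1 * qn - pn * qn1 = s := cfDet n
  have hsq : s ^ 2 = 1 := by
    rw [hsdef, ← pow_mul, mul_comm, pow_mul]; norm_num
  set x : ℤ := s * (k * pn1 - p * qn1) with hxdef
  set y : ℤ := s * (p * qn - k * pn) with hydef
  have hx : x * qn + y * qn1 = k := by
    rw [hxdef, hydef]
    linear_combination (s * k) * hdet + k * hsq
  have hy : x * pn + y * pn1 = p := by
    rw [hxdef, hydef]
    linear_combination (s * p) * hdet + p * hsq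
  have tn := tval h0 h1 hirr n
  have tn1 := tval h0 h1 hirr (n + 1)
  have hqnpos : (1 : ℤ) ≤ qn := by
    rw [hqn]; exact_mod_cast cfQ_pos h0 h1 hirr n
  have hqn1pos : (1 : ℤ) ≤ qn1 := by
    rw [hqn1]; exact_mod_cast cfQ_pos h0 h1 hirr (n + 1)
  have hBn : 0 < Bprod α n := Bprod_pos h0 h1 hirr n
  have hBn1 : 0 < Bprod α (n + 1) := Bprod_pos h0 h1 hirr (n + 1)
  have key : (k : ℝ) * α - (p : ℝ) =
      (-1) ^ n * ((x : ℝ) * Bprod α n - (y : ℝ) * Bprod α (n + 1)) := by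
    have hxr : (x : ℝ) * qn + (y : ℝ) * qn1 = k := by exact_mod_cast hx
    have hyr : (x : ℝ) * pn + (y : ℝ) * pn1 = p := by exact_mod_cast hy
    calc (k : ℝ) * α - (p : ℝ)
        = (x : ℝ) * ((qn : ℝ) * α - pn) + (y : ℝ) * ((qn1 : ℝ) * α - pn1) := by
          rw [← hxr, ← hyr]; ring
      _ = (x : ℝ) * ((-1) ^ n * Bprod α n) + (y : ℝ) * ((-1) ^ (n + 1) * Bprod α (n + 1)) := by
          rw [hqn, hqn1, hpn, hpn1]
          push_cast
          rw [tn, tn1]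
      _ = (-1) ^ n * ((x : ℝ) * Bprod α n - (y : ℝ) * Bprod α (n + 1)) := by ring
  have habs : |(k : ℝ) * α - (p : ℝ)| = |(x : ℝ) * Bprod α n - (y : ℝ) * Bprod α (n + 1)| := by
    rw [key, abs_mul, abs_pow, abs_neg, abs_one, one_pow, one_mul]
  rw [habs]
  rcases eq_or_ne y 0 with hy0 | hy0
  · -- k = x * qn
    have hk : k = x * qn := by rw [← hx, hy0]; ring
    have hx1 : 1 ≤ x := by
      by_contra h
      push_neg at h
      have : x * qn ≤ 0 := mul_nonpos_of_nonpos_of_nonneg (by omega) (by omega)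
      omega
    have hx2 : 2 ≤ x := by
      rcases eq_or_lt_of_le hx1 with h | h
      · exfalso; apply hkne; rw [hqn, hk, ← h]; ring
      · omega
    have hxr : (2 : ℝ) ≤ (x : ℝ) := by exact_mod_cast hx2
    have h2B : 2 * Bprod α n ≤ (x : ℝ) * Bprod α n :=
      mul_le_mul_of_nonneg_right hxr hBn.le
    rw [hy0]
    push_cast
    rw [zero_mul, sub_zero, abs_of_pos (by linarith)]
    linarith
  · rcases eq_or_ne x 0 with hx0 | hx0
    · exfalso
      have hk : k = y * qn1 := by rw [← hx, hx0]; ring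
      have hy1 : 1 ≤ y := by
        by_contra h
        push_neg at h
        have : y * qn1 ≤ 0 := mul_nonpos_of_nonpos_of_nonneg (by omega) (by omega)
        omega
      have : qn1 ≤ y * qn1 := le_mul_of_one_le_left (by omega) hy1
      omega
    · have hsigns : (1 ≤ x ∧ y ≤ -1) ∨ (x ≤ -1 ∧ 1 ≤ y) := by
        rcases lt_or_gt_of_ne hx0 with hxneg | hxpos
        · rcases lt_or_gt_of_ne hy0 with hyneg | hypos
          · exfalso
            have h1' : x * qn ≤ -qn := by nlinarith
            have h2' : y * qn1 ≤ -qn1 := by nlinarith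
            omega
          · right; omega
        · rcases lt_or_gt_of_ne hy0 with hyneg | hypos
          · left; omega
          · exfalso
            have h1' : qn ≤ x * qn := le_mul_of_one_le_left (by omega) (by omega)
            have h2' : qn1 ≤ y * qn1 := le_mul_of_one_le_left (by omega) (by omega)
            omega
      rcases hsigns with ⟨hx1, hy1⟩ | ⟨hx1, hy1⟩
      · have hxr : (1 : ℝ) ≤ (x : ℝ) := by exact_mod_cast hx1
        have hyr : (y : ℝ) ≤ -1 := by exact_mod_cast hy1
        have h1' : Bprod α n ≤ (x : ℝ) * Bprod α n := le_mul_of_one_le_left hBn.le hxr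
        have h2' : (y : ℝ) * Bprod α (n + 1) ≤ -Bprod α (n + 1) := by nlinarith
        rw [abs_of_pos (by linarith)]
        linarith
      · have hxr : (x : ℝ) ≤ -1 := by exact_mod_cast hx1
        have hyr : (1 : ℝ) ≤ (y : ℝ) := by exact_mod_cast hy1
        have h1' : (x : ℝ) * Bprod α n ≤ -Bprod α n := by nlinarith
        have h2' : Bprod α (n + 1) ≤ (y : ℝ) * Bprod α (n + 1) := le_mul_of_one_le_left hBn1.le hyr
        rw [abs_of_neg (by linarith)]
        linarith

include h0 h1 hirr in
lemma nint_cfQ_lt (n : ℕ) (k : ℕ) (hk1 : 1 ≤ k) (hk2 : k < cfQ α (n + 1))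
    (hkne : k ≠ cfQ α n) : nint ((cfQ α n : ℝ) * α) < nint ((k : ℝ) * α) := by
  have hBn : 0 < Bprod α n := Bprod_pos h0 h1 hirr n
  have hA : nint ((cfQ α n : ℝ) * α) ≤ Bprod α n := by
    have hle := nint_le ((cfQ α n : ℝ) * α) (cfP α n : ℤ)
    have habs : |(cfQ α n : ℝ) * α - ((cfP α n : ℤ) : ℝ)| = Bprod α n := by
      push_cast
      rw [tval h0 h1 hirr n, abs_mul, abs_pow, abs_neg, abs_one, one_pow, one_mul,
        abs_of_pos hBn]
    rw [habs] at hle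
    exact hle
  have hB : Bprod α n < nint ((k : ℝ) * α) := by
    have := bestApprox h0 h1 hirr n (k : ℤ) (round ((k : ℝ) * α)) (by exact_mod_cast hk1)
      (by exact_mod_cast hk2) (by exact_mod_cast hkne)
    unfold nint
    push_cast at this ⊢
    exact this
  linarith

end cf

lemma nint_dist_mul (α1 : ℝ) (a b : ℕ) :
    nint (((a : ℝ) - (b : ℝ)) * α1) = nint ((Nat.dist a b : ℝ) * α1) := by
  rcases le_total a b with h | h
  · have hd : (Nat.dist a b : ℝ) = (b : ℝ) - (a : ℝ) := by
      rw [Nat.dist_eq_sub_of_le h]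
      push_cast [h]
      ring
    rw [hd, show ((a : ℝ) - (b : ℝ)) * α1 = -(((b : ℝ) - (a : ℝ)) * α1) by ring, nint_neg]
  · have hd : (Nat.dist a b : ℝ) = (a : ℝ) - (b : ℝ) := by
      rw [Nat.dist_eq_sub_of_le_right h]
      push_cast [h]
      ring
    rw [hd]

/-- Coefficient of the `L_q` distance. -/
noncomputable def lqC (q : ℝ≥0∞) : ℝ := if q = ⊤ then 1 else 2 ^ (1 / q.toReal)

lemma lqC_pos (q : ℝ≥0∞) : 0 < lqC q := by
  unfold lqC
  split
  · norm_num
  · exact Real.rpow_pos_of_pos (by norm_num) _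

lemma kronDist_eq (q : ℝ≥0∞) (hq : 1 ≤ q) (α1 : ℝ) (a b : ℕ) :
    kronDist q ![α1, 1 - α1] a b = lqC q * nint ((Nat.dist a b : ℝ) * α1) := by
  set g : ℝ := nint ((Nat.dist a b : ℝ) * α1) with hg
  have hgnn : 0 ≤ g := nint_nonneg _
  have hc0 : kron ![α1, 1 - α1] a 0 - kron ![α1, 1 - α1] b 0 = ((a : ℝ) - b) * α1 := by
    simp [kron]
    ring
  have hc1 : kron ![α1, 1 - α1] a 1 - kron ![α1, 1 - α1] b 1
      = (-(((a : ℝ) - b) * α1)) + (((a : ℤ) - (b : ℤ) : ℤ) : ℝ) := by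
    simp [kron]
    push_cast
    ring
  have hn0 : nint (kron ![α1, 1 - α1] a 0 - kron ![α1, 1 - α1] b 0) = g := by
    rw [hc0, nint_dist_mul]
  have hn1 : nint (kron ![α1, 1 - α1] a 1 - kron ![α1, 1 - α1] b 1) = g := by
    rw [hc1, nint_add_int, nint_neg, nint_dist_mul]
  unfold kronDist lqDist lqC
  rcases eq_or_ne q ⊤ with htop | htop
  · rw [if_pos htop, if_pos htop, one_mul]
    have hfun : (fun i : Fin 2 => nint (kron ![α1, 1 - α1] a i - kron ![α1, 1 - α1] b i))
        = fun _ => g := by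
      funext i
      fin_cases i
      · exact hn0
      · exact hn1
    rw [hfun]
    exact ciSup_const
  · rw [if_neg htop, if_neg htop]
    have hr1 : (1 : ℝ) ≤ q.toReal := by
      rw [show (1 : ℝ) = (1 : ℝ≥0∞).toReal by simp]
      exact ENNReal.toReal_mono htop hq
    have hr0 : q.toReal ≠ 0 := by linarith
    rw [Fin.sum_univ_two, hn0, hn1]
    have : g ^ q.toReal + g ^ q.toReal = 2 * g ^ q.toReal := by ring
    rw [this, Real.mul_rpow (by norm_num) (Real.rpow_nonneg hgnn _), one_div,
      Real.rpow_rpow_inv hgnn hr0]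

lemma hFun_eq (q : ℝ≥0∞) (hq : 1 ≤ q) (α1 : ℝ) (N Q : ℕ) (hQ1 : 1 ≤ Q)
    (hQN : 2 * Q + 1 ≤ N)
    (K : ∀ k : ℕ, 1 ≤ k → k ≤ N - 1 → k ≠ Q → nint ((Q : ℝ) * α1) < nint ((k : ℝ) * α1))
    (j : ℕ) (hj1 : 1 ≤ j) (hjN : j ≤ N) : hFun q ![α1, 1 - α1] N j = Q := by
  have hC := lqC_pos q
  have hdd : ∀ m m' : ℕ, Nat.dist m m' = m - m' + (m' - m) := fun _ _ => rfl
  set S : Set ℕ := {m : ℕ | m ∈ Finset.Icc 1 N ∧ m ≠ j ∧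
    ∀ m' ∈ Finset.Icc 1 N, m' ≠ j → kronDist q ![α1, 1 - α1] j m ≤ kronDist q ![α1, 1 - α1] j m'}
    with hS
  have hnn : nnIndex q ![α1, 1 - α1] N j = sSup S := rfl
  have claimA : ∀ m, m ∈ Finset.Icc 1 N → Nat.dist j m = Q → m ∈ S := by
    intro m hm hdist
    have hmj : m ≠ j := by
      intro h
      rw [h] at hdist
      rw [hdd] at hdist
      omega
    refine ⟨hm, hmj, ?_⟩
    intro m' hm' hm'j
    rw [kronDist_eq q hq, kronDist_eq q hq, hdist]
    have hk1 : 1 ≤ Nat.dist j m' := by rw [hdd]; simp only [Finset.mem_Icc] at hm'; omega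
    have hk2 : Nat.dist j m' ≤ N - 1 := by
      rw [hdd]
      simp only [Finset.mem_Icc] at hm' ⊢
      omega
    rcases eq_or_ne (Nat.dist j m') Q with h | h
    · rw [h]
    · exact mul_le_mul_of_nonneg_left (K _ hk1 hk2 h).le hC.le
  have claimB : ∀ m, m ∈ S → Nat.dist j m = Q := by
    intro m hmS
    obtain ⟨hm, hmj, hmin⟩ := hmS
    by_contra hne
    -- a witness at distance Q
    have hw : ∃ w, w ∈ Finset.Icc 1 N ∧ w ≠ j ∧ Nat.dist j w = Q := by
      rcases le_or_gt (j + Q) N with h | h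
      · exact ⟨j + Q, by simp only [Finset.mem_Icc]; omega, by omega, by rw [hdd]; omega⟩
      · exact ⟨j - Q, by simp only [Finset.mem_Icc]; omega, by omega, by rw [hdd]; omega⟩
    obtain ⟨w, hwmem, hwj, hwd⟩ := hw
    have hle := hmin w hwmem hwj
    rw [kronDist_eq q hq, kronDist_eq q hq, hwd] at hle
    have hle2 : nint ((Nat.dist j m : ℝ) * α1) ≤ nint ((Q : ℝ) * α1) :=
      le_of_mul_le_mul_left hle hC
    have hk1 : 1 ≤ Nat.dist j m := by
      rw [hdd]; simp only [Finset.mem_Icc] at hm; omega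
    have hk2 : Nat.dist j m ≤ N - 1 := by
      rw [hdd]; simp only [Finset.mem_Icc] at hm; omega
    exact absurd hle2 (not_le.mpr (K _ hk1 hk2 hne))
  rcases le_or_gt (j + Q) N with hcase | hcase
  · have hmem : j + Q ∈ S := claimA (j + Q) (by simp only [Finset.mem_Icc]; omega)
      (by rw [hdd]; omega)
    have hgreat : IsGreatest S (j + Q) := by
      refine ⟨hmem, fun m hmS => ?_⟩
      have := claimB m hmS
      rw [hdd] at this
      omega
    unfold hFun
    rw [hnn, hgreat.csSup_eq, hdd]
    omega
  · have hQj : Q < j := by omega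
    have hmem : j - Q ∈ S := claimA (j - Q) (by simp only [Finset.mem_Icc]; omega)
      (by rw [hdd]; omega)
    have hgreat : IsGreatest S (j - Q) := by
      refine ⟨hmem, fun m hmS => ?_⟩
      have h1 := claimB m hmS
      have h2 := hmS.1
      simp only [Finset.mem_Icc] at h2
      rw [hdd] at h1
      omega
    unfold hFun
    rw [hnn, hgreat.csSup_eq, hdd]
    omega

/-- For irrational `α_1 ∈ (1/2, 1)` with partial quotients `a_i > 1` for all
`i ≥ 2`, convergent denominators `(q_k)`, `α = (α_1, 1 - α_1)`, and `1 ≤ q ≤ ∞`: for every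
`i ≥ 1` and every `N` with `2q_{i+1} + 1 ≤ N ≤ q_{i+2}`, one has `h_j(N) = h_1(N)` for all
`j = 1, …, N`. -/
theorem statement13 (α1 : ℝ) (hmem : α1 ∈ Set.Ioo (1/2 : ℝ) 1) (hirr : Irrational α1)
    (ha : ∀ i, 2 ≤ i → 1 < cfA α1 i) (q : ℝ≥0∞) (hq : 1 ≤ q)
    (i : ℕ) (hi : 1 ≤ i) (N : ℕ)
    (hN1 : 2 * cfQ α1 (i + 1) + 1 ≤ N) (hN2 : N ≤ cfQ α1 (i + 2)) :
    ∀ j, 1 ≤ j → j ≤ N → hFun q ![α1, 1 - α1] N j = hFun q ![α1, 1 - α1] N 1 := by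
  obtain ⟨hmem1, hmem2⟩ := hmem
  have h0 : 0 < α1 := by linarith
  set Q : ℕ := cfQ α1 (i + 1) with hQ
  have hQ1 : 1 ≤ Q := cfQ_pos h0 hmem2 hirr (i + 1)
  have hQ2 : 1 ≤ cfQ α1 (i + 2) := cfQ_pos h0 hmem2 hirr (i + 2)
  have K : ∀ k : ℕ, 1 ≤ k → k ≤ N - 1 → k ≠ Q →
      nint ((Q : ℝ) * α1) < nint ((k : ℝ) * α1) := by
    intro k hk1 hk2 hkQ
    exact nint_cfQ_lt h0 hmem2 hirr (i + 1) k hk1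
      (by rw [show i + 1 + 1 = i + 2 from rfl]; omega) hkQ
  intro j hj1 hjN
  rw [hFun_eq q hq α1 N Q hQ1 hN1 K j hj1 hjN,
    hFun_eq q hq α1 N Q hQ1 hN1 K 1 le_rfl (by omega)]
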